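/- Let Φ ⊂ V be a finite root system in a Euclidean space V (in the crystallographic sense), and let θ = (α₁,…,α_r) and θ' = (β₁,…,β_s) be tuples of pairwise orthogonal roots of Φ, all of the same length, such that no root of Φ is orthogonal to every α_i and no root is orthogonal to every β_j. Then there exists w in the Weyl group W of Φ such that {α₁,…,α_r} = {w(β₁),…,w(β_s)}; in particular r = s. -/

import Mathlib

open scoped InnerProductSpace

/-- The reflection across the hyperplane orthogonal to `α`. -/
noncomputable def preRefl {V : Type*} [NormedAddCommGroup V] [InnerProductSpace ℝ V]
    (α : V) : V → V :=
  fun x => x - (2 * ⟪α, x⟫_ℝ / ⟪α, α⟫_ℝ) • α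

set_option linter.unusedSectionVars false

/-- The set of generating reflections attached to `Φ`. -/
def genSet {V : Type*} [NormedAddCommGroup V] [InnerProductSpace ℝ V] (Φ : Set V) :
    Set (V ≃ₗᵢ[ℝ] V) := {w : V ≃ₗᵢ[ℝ] V | ∃ α ∈ Φ, ⇑w = preRefl α}

section aux
variable {V : Type*} [NormedAddCommGroup V] [InnerProductSpace ℝ V] [FiniteDimensional ℝ V]

/-- The reflection in the root `α` as a linear isometry equivalence. -/
noncomputable def myRefl (α : V) : V ≃ₗᵢ[ℝ] V := Submodule.reflection (ℝ ∙ α)ᗮ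

lemma myRefl_coe {α : V} (hα : α ≠ 0) : ⇑(myRefl α) = preRefl α := by
  funext x
  have h : ⟪α, α⟫_ℝ = ‖α‖ ^ 2 := real_inner_self_eq_norm_sq α
  have hn : ‖α‖ ^ 2 ≠ 0 := pow_ne_zero _ (norm_ne_zero_iff.mpr hα)
  rw [myRefl, Submodule.reflection_apply, Submodule.starProjection_orthogonal_val,
    Submodule.starProjection_singleton]
  simp only [preRefl, h, RCLike.ofReal_real_eq_id, id_eq]
  match_scalars <;> field_simp <;> ring

lemma myRefl_mem {Φ : Set V} {α : V} (h0 : (0 : V) ∉ Φ) (hα : α ∈ Φ) :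
    myRefl α ∈ Subgroup.closure (genSet Φ) :=
  Subgroup.subset_closure ⟨α, hα, myRefl_coe (fun h => h0 (h ▸ hα))⟩

lemma preRefl_of_inner_eq_zero {α x : V} (h : ⟪α, x⟫_ℝ = 0) : preRefl α x = x := by
  simp [preRefl, h]

lemma preRefl_involutive (α : V) (x : V) : preRefl α (preRefl α x) = x := by
  by_cases hα : α = 0
  · simp [preRefl, hα]
  · calc preRefl α (preRefl α x) = myRefl α (myRefl α x) := by rw [myRefl_coe hα]
    _ = x := by rw [myRefl]; exact Submodule.reflection_reflection _ x

/-- Elements of the Weyl group map `Φ` into `Φ`, as do their inverses. -/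
lemma closure_maps {Φ : Set V} (hrefl : ∀ α ∈ Φ, ∀ β ∈ Φ, preRefl α β ∈ Φ)
    {w : V ≃ₗᵢ[ℝ] V} (hw : w ∈ Subgroup.closure (genSet Φ)) :
    (∀ γ ∈ Φ, w γ ∈ Φ) ∧ (∀ γ ∈ Φ, w.symm γ ∈ Φ) := by
  induction hw using Subgroup.closure_induction with
  | mem x hx =>
    obtain ⟨α, hα, hx⟩ := hx
    have h1 : ∀ γ ∈ Φ, x γ ∈ Φ := fun γ hγ => by rw [hx]; exact hrefl α hα γ hγ
    refine ⟨h1, fun γ hγ => ?_⟩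
    have : x.symm γ = x γ := by
      conv_lhs => rw [show γ = x (x γ) by rw [hx]; exact (preRefl_involutive α γ).symm]
      rw [x.symm_apply_apply]
    rw [this]; exact h1 γ hγ
  | one => exact ⟨fun γ hγ => hγ, fun γ hγ => hγ⟩
  | mul x y hx hy ihx ihy =>
    refine ⟨fun γ hγ => ?_, fun γ hγ => ?_⟩
    · rw [LinearIsometryEquiv.coe_mul, Function.comp_apply]
      exact ihx.1 _ (ihy.1 γ hγ)
    · have : (x * y).symm γ = y.symm (x.symm γ) := rfl
      rw [this]; exact ihy.2 _ (ihx.2 γ hγ)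
  | inv x hx ihx =>
    refine ⟨fun γ hγ => ?_, fun γ hγ => ?_⟩
    · rw [LinearIsometryEquiv.inv_def]; exact ihx.2 γ hγ
    · have : (x⁻¹).symm γ = x γ := rfl
      rw [this]; exact ihx.1 γ hγ

/-- Elements of the Weyl group of roots orthogonal to `v` fix `v`. -/
lemma closure_fixes {Φ : Set V} {v : V} (hperp : ∀ γ ∈ Φ, ⟪γ, v⟫_ℝ = 0)
    {w : V ≃ₗᵢ[ℝ] V} (hw : w ∈ Subgroup.closure (genSet Φ)) : w v = v := by
  induction hw using Subgroup.closure_induction with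
  | mem x hx =>
    obtain ⟨α, hα, hx⟩ := hx
    rw [hx]; exact preRefl_of_inner_eq_zero (hperp α hα)
  | one => rfl
  | mul x y hx hy ihx ihy =>
    rw [LinearIsometryEquiv.coe_mul, Function.comp_apply, ihy, ihx]
  | inv x hx ihx =>
    rw [LinearIsometryEquiv.inv_def]
    conv_lhs => rw [← ihx]
    exact x.symm_apply_apply v

lemma preRefl_neg_self {α : V} (hα : ⟪α, α⟫_ℝ ≠ 0) : preRefl α (-α) = α := by
  simp only [preRefl, inner_neg_right]
  rw [show 2 * -⟪α, α⟫_ℝ / ⟪α, α⟫_ℝ = -2 by field_simp]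
  module

/-- Two non-orthogonal roots of the same length are Weyl-conjugate. -/
lemma conj_of_inner_ne_zero {Φ : Set V} (h0 : (0 : V) ∉ Φ)
    (hrefl : ∀ α ∈ Φ, ∀ β ∈ Φ, preRefl α β ∈ Φ)
    (hcrys : ∀ α ∈ Φ, ∀ β ∈ Φ, ∃ n : ℤ, 2 * ⟪α, β⟫_ℝ = n * ⟪α, α⟫_ℝ)
    {α β : V} (hαΦ : α ∈ Φ) (hβΦ : β ∈ Φ) (hlen : ‖α‖ = ‖β‖)
    (hne : ⟪α, β⟫_ℝ ≠ 0) :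
    ∃ w ∈ Subgroup.closure (genSet Φ), w β = α := by
  have hα0 : α ≠ 0 := fun h => h0 (h ▸ hαΦ)
  have ht : ⟪α, α⟫_ℝ = ‖α‖ ^ 2 := real_inner_self_eq_norm_sq α
  have htpos : (0:ℝ) < ⟪α, α⟫_ℝ := by rw [ht]; exact pow_pos (norm_pos_iff.mpr hα0) 2
  have htne : ⟪α, α⟫_ℝ ≠ 0 := htpos.ne'
  have hββ : ⟪β, β⟫_ℝ = ⟪α, α⟫_ℝ := by
    rw [real_inner_self_eq_norm_sq, real_inner_self_eq_norm_sq, hlen]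
  obtain ⟨n, hab⟩ := hcrys α hαΦ β hβΦ
  have hcs' : |⟪α, β⟫_ℝ| ≤ ⟪α, α⟫_ℝ := by
    calc |⟪α, β⟫_ℝ| ≤ ‖α‖ * ‖β‖ := abs_real_inner_le_norm α β
    _ = ⟪α, α⟫_ℝ := by rw [ht, ← hlen]; ring
  have hb2 : |(n:ℝ)| * ⟪α, α⟫_ℝ ≤ 2 * ⟪α, α⟫_ℝ := by
    calc |(n:ℝ)| * ⟪α, α⟫_ℝ = |(n:ℝ) * ⟪α, α⟫_ℝ| := by rw [abs_mul, abs_of_pos htpos]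
    _ = |2 * ⟪α, β⟫_ℝ| := by rw [hab]
    _ = 2 * |⟪α, β⟫_ℝ| := by rw [abs_mul]; norm_num
    _ ≤ 2 * ⟪α, α⟫_ℝ := by linarith
  have hb : |(n:ℝ)| ≤ 2 := le_of_mul_le_mul_right hb2 htpos
  have hn0 : n ≠ 0 := by
    rintro rfl
    simp only [Int.cast_zero, zero_mul] at hab
    exact hne (by linarith)
  have hnint : n = 1 ∨ n = -1 ∨ n = 2 ∨ n = -2 := by
    have h1 : (-2:ℝ) ≤ (n:ℝ) := (abs_le.mp hb).1
    have h2 : ((n:ℝ)) ≤ 2 := (abs_le.mp hb).2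
    have h1' : (-2:ℤ) ≤ n := by exact_mod_cast h1
    have h2' : n ≤ (2:ℤ) := by exact_mod_cast h2
    omega
  rcases hnint with h1 | h1 | h1 | h1
  · -- n = 1 : reflect in β - α
    subst h1
    push_cast at hab
    have hγΦ : β - α ∈ Φ := by
      have h := hrefl α hαΦ β hβΦ
      have hc : 2 * ⟪α, β⟫_ℝ / ⟪α, α⟫_ℝ = 1 := by field_simp; linarith
      have heq : preRefl α β = β - α := by
        simp only [preRefl]; rw [hc, one_smul]
      rwa [heq] at h
    have hγ0 : β - α ≠ 0 := fun h => h0 (h ▸ hγΦ)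
    refine ⟨myRefl (β - α), myRefl_mem h0 hγΦ, ?_⟩
    rw [myRefl_coe hγ0]
    have h1 : ⟪β - α, β⟫_ℝ = ⟪α, α⟫_ℝ - ⟪α, β⟫_ℝ := by
      rw [inner_sub_left, hββ]
    have h2 : ⟪β - α, β - α⟫_ℝ = ⟪α, α⟫_ℝ := by
      simp only [inner_sub_left, inner_sub_right, hββ]
      linarith [real_inner_comm β α]
    simp only [preRefl]
    rw [h1, h2, show 2 * (⟪α, α⟫_ℝ - ⟪α, β⟫_ℝ) / ⟪α, α⟫_ℝ = 1 by field_simp; linarith,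
      one_smul]
    abel
  · -- n = -1 : β + α is a root; w = s_α ∘ s_{β+α}
    subst h1
    push_cast at hab
    have hγΦ : β + α ∈ Φ := by
      have h := hrefl α hαΦ β hβΦ
      have hc : 2 * ⟪α, β⟫_ℝ / ⟪α, α⟫_ℝ = -1 := by field_simp; linarith
      have heq : preRefl α β = β + α := by
        simp only [preRefl]; rw [hc]; module
      rwa [heq] at h
    have hγ0 : β + α ≠ 0 := fun h => h0 (h ▸ hγΦ)
    refine ⟨myRefl α * myRefl (β + α), mul_mem (myRefl_mem h0 hαΦ) (myRefl_mem h0 hγΦ), ?_⟩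
    rw [LinearIsometryEquiv.coe_mul, Function.comp_apply, myRefl_coe hγ0, myRefl_coe hα0]
    have h1 : ⟪β + α, β⟫_ℝ = ⟪α, α⟫_ℝ + ⟪α, β⟫_ℝ := by
      rw [inner_add_left, hββ]
    have h2 : ⟪β + α, β + α⟫_ℝ = ⟪α, α⟫_ℝ := by
      simp only [inner_add_left, inner_add_right, hββ]
      linarith [real_inner_comm β α]
    have hstep : preRefl (β + α) β = -α := by
      simp only [preRefl]
      rw [h1, h2, show 2 * (⟪α, α⟫_ℝ + ⟪α, β⟫_ℝ) / ⟪α, α⟫_ℝ = 1 by field_simp; linarith,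
        one_smul]
      abel
    rw [hstep, preRefl_neg_self htne]
  · -- n = 2 : β = α
    subst h1
    push_cast at hab
    have hz : ⟪β - α, β - α⟫_ℝ = 0 := by
      simp only [inner_sub_left, inner_sub_right, hββ]
      linarith [real_inner_comm β α]
    have : β = α := by
      have := inner_self_eq_zero.mp hz
      rwa [sub_eq_zero] at this
    exact ⟨1, one_mem _, by simp [this]⟩
  · -- n = -2 : β = -α ; w = s_α
    subst h1
    push_cast at hab
    have hz : ⟪β + α, β + α⟫_ℝ = 0 := by
      simp only [inner_add_left, inner_add_right, hββ]
      linarith [real_inner_comm β α]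
    have hβeq : β = -α := by
      have := inner_self_eq_zero.mp hz
      linear_combination (norm := module) this
    refine ⟨myRefl α, myRefl_mem h0 hαΦ, ?_⟩
    rw [myRefl_coe hα0, hβeq, preRefl_neg_self htne]

/-- The main induction: maximal orthogonal same-length tuples of roots are conjugate,
by induction on the size of the root system. -/
lemma key : ∀ n : ℕ, ∀ (Φ : Set V), Φ.Finite → (0:V) ∉ Φ →
    (∀ α ∈ Φ, ∀ β ∈ Φ, preRefl α β ∈ Φ) →
    (∀ α ∈ Φ, ∀ β ∈ Φ, ∃ m : ℤ, 2 * ⟪α, β⟫_ℝ = m * ⟪α, α⟫_ℝ) →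
    Φ.ncard ≤ n →
    ∀ (r s : ℕ) (a : Fin r → V) (b : Fin s → V),
      (∀ i, a i ∈ Φ) → (∀ j, b j ∈ Φ) →
      (∀ i j, i ≠ j → ⟪a i, a j⟫_ℝ = 0) → (∀ i j, i ≠ j → ⟪b i, b j⟫_ℝ = 0) →
      (∀ i j, ‖a i‖ = ‖b j‖) →
      (∀ γ ∈ Φ, ∃ i, ⟪γ, a i⟫_ℝ ≠ 0) → (∀ γ ∈ Φ, ∃ j, ⟪γ, b j⟫_ℝ ≠ 0) →
      ∃ w ∈ Subgroup.closure (genSet Φ), Set.range a = w '' Set.range b ∧ r = s := by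
  intro n
  induction n with
  | zero =>
    intro Φ hfin h0 hrefl hcrys hcard r s a b haΦ hbΦ haorth hborth hlen hafull hbfull
    have hΦ : Φ = ∅ := (Set.ncard_eq_zero hfin).mp (Nat.le_zero.mp hcard)
    subst hΦ
    obtain _ | r₀ := r
    · obtain _ | s₀ := s
      · exact ⟨1, one_mem _, by simp, rfl⟩
      · exact absurd (hbΦ 0) (by simp)
    · exact absurd (haΦ 0) (by simp)
  | succ n ih =>
    intro Φ hfin h0 hrefl hcrys hcard r s a b haΦ hbΦ haorth hborth hlen hafull hbfull
    obtain _ | r₀ := r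
    · -- r = 0 forces Φ = ∅, hence s = 0
      have hΦ : Φ = ∅ := by
        ext γ
        simp only [Set.mem_empty_iff_false, iff_false]
        intro hγ
        obtain ⟨i, _⟩ := hafull γ hγ
        exact i.elim0
      subst hΦ
      obtain _ | s₀ := s
      · exact ⟨1, one_mem _, by simp, rfl⟩
      · exact absurd (hbΦ 0) (by simp)
    obtain _ | s₀ := s
    · have hΦ : Φ = ∅ := by
        ext γ
        simp only [Set.mem_empty_iff_false, iff_false]
        intro hγ
        obtain ⟨j, _⟩ := hbfull γ hγ
        exact j.elim0
      exact absurd (haΦ 0) (by simp [hΦ])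
    -- main case
    obtain ⟨j, hj⟩ := hbfull (a 0) (haΦ 0)
    obtain ⟨w, hwW, hwβ⟩ :=
      conj_of_inner_ne_zero h0 hrefl hcrys (haΦ 0) (hbΦ j) (hlen 0 j) hj
    have hmaps := closure_maps hrefl hwW
    set b₂ : Fin (s₀+1) → V := fun k => w (b (Equiv.swap 0 j k)) with hb₂
    have hb₂0 : b₂ 0 = a 0 := by
      rw [hb₂]; simp only [Equiv.swap_apply_left]; exact hwβ
    have hb₂Φ : ∀ k, b₂ k ∈ Φ := fun k => hmaps.1 _ (hbΦ _)
    have hb₂orth : ∀ i k, i ≠ k → ⟪b₂ i, b₂ k⟫_ℝ = 0 := by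
      intro i k hik
      rw [hb₂]
      simp only [LinearIsometryEquiv.inner_map_map]
      exact hborth _ _ ((Equiv.swap 0 j).injective.ne hik)
    have hb₂len : ∀ k, ‖b₂ k‖ = ‖b (Equiv.swap 0 j k)‖ := fun k => w.norm_map _
    have hb₂full : ∀ γ ∈ Φ, ∃ k, ⟪γ, b₂ k⟫_ℝ ≠ 0 := by
      intro γ hγ
      obtain ⟨j0, hj0⟩ := hbfull (w.symm γ) (hmaps.2 γ hγ)
      refine ⟨Equiv.swap 0 j j0, ?_⟩
      rw [hb₂]
      simp only [Equiv.swap_apply_self]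
      have h1 : ⟪γ, w (b j0)⟫_ℝ = ⟪w.symm γ, b j0⟫_ℝ := by
        conv_lhs => rw [← w.apply_symm_apply γ]
        exact w.inner_map_map _ _
      rw [h1]; exact hj0
    -- the orthogonal root subsystem
    set Φ' : Set V := {γ ∈ Φ | ⟪γ, a 0⟫_ℝ = 0} with hΦ'
    have hsub : Φ' ⊆ Φ := fun γ hγ => hγ.1
    have hfin' : Φ'.Finite := hfin.subset hsub
    have h0' : (0:V) ∉ Φ' := fun h => h0 (hsub h)
    have hrefl' : ∀ x ∈ Φ', ∀ y ∈ Φ', preRefl x y ∈ Φ' := by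
      intro x hx y hy
      refine ⟨hrefl x hx.1 y hy.1, ?_⟩
      simp only [preRefl, inner_sub_left, real_inner_smul_left, hx.2, hy.2, mul_zero, sub_zero]
    have hcrys' : ∀ x ∈ Φ', ∀ y ∈ Φ', ∃ m : ℤ, 2 * ⟪x, y⟫_ℝ = m * ⟪x, x⟫_ℝ :=
      fun x hx y hy => hcrys x hx.1 y hy.1
    have hcard' : Φ'.ncard ≤ n := by
      have ha0 : a 0 ∉ Φ' := by
        intro h
        exact inner_self_ne_zero.mpr (fun h' => h0 (h' ▸ haΦ 0)) h.2
      have hssub : Φ' ⊂ Φ := ⟨hsub, fun h => ha0 (h (haΦ 0))⟩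
      have := Set.ncard_lt_ncard hssub hfin
      omega
    -- tails
    set a' : Fin r₀ → V := fun i => a i.succ with ha'
    set b' : Fin s₀ → V := fun k => b₂ k.succ with hb'
    have ha'Φ' : ∀ i, a' i ∈ Φ' := fun i =>
      ⟨haΦ _, haorth _ _ (Fin.succ_ne_zero i)⟩
    have hb'Φ' : ∀ k, b' k ∈ Φ' := fun k =>
      ⟨hb₂Φ _, by rw [hb', ← hb₂0]; exact hb₂orth _ _ (Fin.succ_ne_zero k)⟩
    have ha'orth : ∀ i k, i ≠ k → ⟪a' i, a' k⟫_ℝ = 0 := fun i k hik =>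
      haorth _ _ ((Fin.succ_injective _).ne hik)
    have hb'orth : ∀ i k, i ≠ k → ⟪b' i, b' k⟫_ℝ = 0 := fun i k hik =>
      hb₂orth _ _ ((Fin.succ_injective _).ne hik)
    have hlen' : ∀ i k, ‖a' i‖ = ‖b' k‖ := fun i k => by
      rw [hb', ha']; simp only; rw [hb₂len]; exact hlen _ _
    have ha'full : ∀ γ ∈ Φ', ∃ i, ⟪γ, a' i⟫_ℝ ≠ 0 := by
      intro γ hγ
      obtain ⟨i, hi⟩ := hafull γ hγ.1
      have hi0 : i ≠ 0 := fun h => hi (h ▸ hγ.2)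
      obtain ⟨i', rfl⟩ := Fin.eq_succ_of_ne_zero hi0
      exact ⟨i', hi⟩
    have hb'full : ∀ γ ∈ Φ', ∃ k, ⟪γ, b' k⟫_ℝ ≠ 0 := by
      intro γ hγ
      obtain ⟨k, hk⟩ := hb₂full γ hγ.1
      have hk0 : k ≠ 0 := by
        intro h
        rw [h, hb₂0] at hk
        exact hk hγ.2
      obtain ⟨k', rfl⟩ := Fin.eq_succ_of_ne_zero hk0
      exact ⟨k', hk⟩
    obtain ⟨w', hw'W, hw'range, hw'card⟩ :=
      ih Φ' hfin' h0' hrefl' hcrys' hcard' r₀ s₀ a' b' ha'Φ' hb'Φ' ha'orth hb'orth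
        hlen' ha'full hb'full
    have hle : Subgroup.closure (genSet Φ') ≤ Subgroup.closure (genSet Φ) :=
      Subgroup.closure_mono (fun x hx => by
        obtain ⟨γ, hγ, hxγ⟩ := hx; exact ⟨γ, hsub hγ, hxγ⟩)
    have hfix : w' (a 0) = a 0 := closure_fixes (Φ := Φ') (fun γ hγ => hγ.2) hw'W
    refine ⟨w' * w, mul_mem (hle hw'W) hwW, ?_, by omega⟩
    have hra : Set.range a = insert (a 0) (Set.range a') := Fin.range_fin_succ a
    have hrb₂ : Set.range b₂ = insert (a 0) (Set.range b') := by
      rw [Fin.range_fin_succ b₂, hb₂0]; rfl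
    have hrbw : Set.range b₂ = w '' Set.range b := by
      rw [hb₂]
      have : (fun k => w (b ((Equiv.swap 0 j) k))) = ⇑w ∘ b ∘ (Equiv.swap 0 j) := rfl
      rw [this, Set.range_comp, Function.Surjective.range_comp (Equiv.swap 0 j).surjective b]
    calc Set.range a = insert (a 0) (Set.range a') := hra
    _ = insert (w' (a 0)) (w' '' Set.range b') := by rw [hfix, hw'range]
    _ = w' '' insert (a 0) (Set.range b') := (Set.image_insert_eq).symm
    _ = w' '' Set.range b₂ := by rw [hrb₂]
    _ = w' '' (w '' Set.range b) := by rw [hrbw]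
    _ = ⇑(w' * w) '' Set.range b := by
        rw [LinearIsometryEquiv.coe_mul, Set.image_comp]

end aux

/-- in a finite (crystallographic, reduced) root system `Φ`, any two
maximal tuples of pairwise orthogonal roots of a common length (i.e. such that no
root is orthogonal to all entries) are conjugate under the Weyl group `W`; in
particular they have the same number of entries. -/
theorem stmt_4 {V : Type*} [NormedAddCommGroup V] [InnerProductSpace ℝ V]
    [FiniteDimensional ℝ V]
    (Φ : Set V) (hfin : Φ.Finite) (h0 : (0 : V) ∉ Φ)
    (hred : ∀ α ∈ Φ, ∀ c : ℝ, c • α ∈ Φ → c = 1 ∨ c = -1)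
    (hrefl : ∀ α ∈ Φ, ∀ β ∈ Φ, preRefl α β ∈ Φ)
    (hcrys : ∀ α ∈ Φ, ∀ β ∈ Φ, ∃ n : ℤ, 2 * ⟪α, β⟫_ℝ = n * ⟪α, α⟫_ℝ)
    (W : Subgroup (V ≃ₗᵢ[ℝ] V))
    (hW : W = Subgroup.closure {w : V ≃ₗᵢ[ℝ] V | ∃ α ∈ Φ, ⇑w = preRefl α})
    {r s : ℕ} (a : Fin r → V) (b : Fin s → V)
    (haΦ : ∀ i, a i ∈ Φ) (hbΦ : ∀ j, b j ∈ Φ)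
    (haorth : ∀ i j, i ≠ j → ⟪a i, a j⟫_ℝ = 0)
    (hborth : ∀ i j, i ≠ j → ⟪b i, b j⟫_ℝ = 0)
    (hlen : ∀ i j, ‖a i‖ = ‖b j‖)
    (hlena : ∀ i j, ‖a i‖ = ‖a j‖) (hlenb : ∀ i j, ‖b i‖ = ‖b j‖)
    (hafull : ∀ γ ∈ Φ, ∃ i, ⟪γ, a i⟫_ℝ ≠ 0)
    (hbfull : ∀ γ ∈ Φ, ∃ j, ⟪γ, b j⟫_ℝ ≠ 0) :
    ∃ w : V ≃ₗᵢ[ℝ] V, w ∈ W ∧ Set.range a = w '' Set.range b ∧ r = s := by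
  subst hW
  obtain ⟨w, hw, h1, h2⟩ :=
    key Φ.ncard Φ hfin h0 hrefl hcrys le_rfl r s a b haΦ hbΦ haorth hborth hlen hafull hbfull
  exact ⟨w, hw, h1, h2⟩
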